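/- Synchronization lemma: if k ≥ 2 and x ∈ Z_q^k is properly spaced in y, then there exists a string v such that both y ⟹_k* v·x and y·x ⟹_k* v·x under reverse-complement duplications of length k. -/

import Mathlib

/-- One reverse-complement duplication of length `k`: a `k`-factor `v` of `x`
gets a reverse-complement copy inserted right after it. -/
def RCStep {q : ℕ} (bar : ZMod q → ZMod q) (k : ℕ) (x y : List (ZMod q)) : Prop :=
  ∃ u v w : List (ZMod q), v.length = k ∧ x = u ++ v ++ w ∧
    y = u ++ v ++ (v.map bar).reverse ++ w

/-- Finitely many (possibly zero) reverse-complement duplications of length `k`. -/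
def RCDerives {q : ℕ} (bar : ZMod q → ZMod q) (k : ℕ) :
    List (ZMod q) → List (ZMod q) → Prop :=
  Relation.ReflTransGen (RCStep bar k)

/-- Interleave gap strings with the letters of `x`:
`interleave [g0,…,gk] [x0,…,x_{k-1}] = g0 ++ x0 :: g1 ++ x1 :: ⋯ x_{k-1} :: gk`. -/
def interleave {α : Type*} : List (List α) → List α → List α
  | [], _ => []
  | g :: _, [] => g
  | g :: gs, a :: as => g ++ a :: interleave gs as

/-- `x ∈ Z_q^k` is properly spaced in `y`: `x` is a subsequence of `y` via a gap
decomposition `y = y⁽⁰⁾x₀y⁽¹⁾⋯x_{k-1}y⁽ᵏ⁾`, and when `k` is even all of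
`|y⁽¹⁾|,…,|y⁽ᵏ⁾|` are even. -/
def ProperlySpaced {α : Type*} (k : ℕ) (x y : List α) : Prop :=
  x.length = k ∧ ∃ gaps : List (List α), gaps.length = k + 1 ∧
    y = interleave gaps x ∧ (k % 2 = 0 → ∀ g ∈ gaps.tail, g.length % 2 = 0)

namespace RCSync

variable {q : ℕ}

abbrev RC (bar : ZMod q → ZMod q) (l : List (ZMod q)) : List (ZMod q) :=
  (l.map bar).reverse

lemma length_RC (bar : ZMod q → ZMod q) (l : List (ZMod q)) :
    (RC bar l).length = l.length := by simp [RC]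

lemma RC_RC {bar : ZMod q → ZMod q} (hinv : Function.Involutive bar)
    (l : List (ZMod q)) : RC bar (RC bar l) = l := by
  simp [RC, List.map_reverse, List.map_map, hinv.comp_self]

lemma single (bar : ZMod q → ZMod q) (k : ℕ) {a b : List (ZMod q)}
    (u v w : List (ZMod q)) (hv : v.length = k)
    (ha : a = u ++ v ++ w) (hb : b = u ++ v ++ RC bar v ++ w) :
    RCDerives bar k a b :=
  Relation.ReflTransGen.single ⟨u, v, w, hv, ha, hb⟩

/-- double hop with i = 0 -/
lemma move1 {bar : ZMod q → ZMod q} (hinv : Function.Involutive bar) {k : ℕ} (hk : 2 ≤ k)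
    (c : ZMod q) (P M₁ M₂ rest : List (ZMod q))
    (h₁ : M₁.length = k - 1) (h₂ : M₂.length = k - 1) :
    RCDerives bar k (P ++ c :: (M₁ ++ (M₂ ++ rest)))
      ((P ++ (c :: (M₁ ++ RC bar M₁ ++ bar c :: (M₂ ++ RC bar M₂)))) ++ c :: rest) := by
  refine Relation.ReflTransGen.trans
    (single bar k P (c :: M₁) (M₂ ++ rest) (by simp; omega) (by simp) rfl) ?_
  refine single bar k (P ++ c :: (M₁ ++ RC bar M₁)) (bar c :: M₂) rest
    (by simp; omega) ?_ ?_
  · simp [RC, List.append_assoc]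
  · simp [RC, hinv c, List.append_assoc]

/-- finishing pair of hops -/
lemma moveFin {bar : ZMod q → ZMod q} (hinv : Function.Involutive bar) {k : ℕ}
    (c : ZMod q) (P₀ A B M₂ rest : List (ZMod q))
    (hAB : A.length + B.length + 1 = k) (hM : M₂.length = B.length) :
    RCDerives bar k ((P₀ ++ A) ++ c :: ((B ++ M₂) ++ rest))
      (((P₀ ++ A) ++ (c :: (B ++ RC bar B ++ bar c :: (RC bar A ++ M₂ ++ RC bar (RC bar A ++ M₂))))) ++ c :: rest) := by
  refine Relation.ReflTransGen.trans
    (single bar k P₀ (A ++ c :: B) (M₂ ++ rest) (by simp; omega) (by simp) rfl) ?_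
  refine single bar k (P₀ ++ A ++ c :: (B ++ RC bar B)) (bar c :: (RC bar A ++ M₂)) rest
    (by simp; omega) ?_ ?_
  · simp [RC, List.append_assoc]
  · simp [RC, hinv c, List.append_assoc]

/-- shift: duplicate a window inside the middle -/
lemma moveS {bar : ZMod q → ZMod q} {k : ℕ}
    (c : ZMod q) (P V M₂ rest : List (ZMod q)) (hV : V.length = k) :
    RCDerives bar k (P ++ c :: ((V ++ M₂) ++ rest))
      (P ++ c :: ((V ++ RC bar V ++ M₂) ++ rest)) := by
  refine single bar k (P ++ [c]) V (M₂ ++ rest) hV (by simp) (by simp)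



lemma phase_even {bar : ZMod q → ZMod q} (hinv : Function.Involutive bar) {k : ℕ} (hk : 2 ≤ k)
    (c : ZMod q) :
    ∀ n (P M T : List (ZMod q)), M.length = 2 * (k - 1) + 2 * n →
      ∃ extra s, RCDerives bar k (P ++ c :: (M ++ T)) ((P ++ extra) ++ c :: T) ∧
        extra.length = M.length + s * k := by
  intro n
  induction n using Nat.strong_induction_on with
  | _ n ih =>
    intro P M T hM
    -- split M = M₁ ++ (M₂ ++ M₃)
    set M₁ : List (ZMod q) := M.take (k - 1) with hM₁def
    set M₂ : List (ZMod q) := (M.drop (k - 1)).take (k - 1) with hM₂def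
    set M₃ : List (ZMod q) := (M.drop (k - 1)).drop (k - 1) with hM₃def
    have hsplit : M = M₁ ++ (M₂ ++ M₃) := by
      rw [hM₁def, hM₂def, hM₃def, List.take_append_drop, List.take_append_drop]
    have h₁ : M₁.length = k - 1 := by
      simp [hM₁def]; omega
    have h₂ : M₂.length = k - 1 := by
      simp [hM₂def]; omega
    have h₃ : M₃.length = 2 * n := by
      simp [hM₃def]; omega
    set E : List (ZMod q) := c :: (M₁ ++ RC bar M₁ ++ bar c :: (M₂ ++ RC bar M₂)) with hEdef
    have hE : E.length = 4 * k - 2 := by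
      simp [hEdef, length_RC, h₁, h₂]; omega
    have hmove1 : RCDerives bar k (P ++ c :: (M ++ T)) ((P ++ E) ++ c :: (M₃ ++ T)) := by
      have := move1 hinv hk c P M₁ M₂ (M₃ ++ T) h₁ h₂
      rw [hsplit]
      simpa [hEdef, List.append_assoc] using this
    rcases Nat.eq_zero_or_pos n with hn0 | hnpos
    · -- M₃ = []; done after move1
      subst hn0
      have hM₃nil : M₃ = [] := by
        have := h₃; simpa [List.length_eq_zero_iff] using this
      refine ⟨E, 2, ?_, by omega⟩
      rw [hM₃nil] at hmove1
      simpa using hmove1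
    rcases le_or_gt (k - 1) n with hge | hlt
    · -- recurse
      obtain ⟨extra', s', hder', hlen'⟩ :=
        ih (n - (k - 1)) (by omega) (P ++ E) M₃ T (by omega)
      refine ⟨E ++ extra', s' + 2, ?_, ?_⟩
      · refine Relation.ReflTransGen.trans hmove1 ?_
        simpa [RCDerives, List.append_assoc] using hder'
      · have hmul : (s' + 2) * k = s' * k + 2 * k := by ring
        simp only [List.length_append]
        omega
    · -- 0 < n < k - 1 : finisher
      set L : List (ZMod q) := P ++ E with hLdef
      have hLlen : (k - 1 - n) ≤ L.length := by
        simp [hLdef, hE]; omega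
      set P₀ : List (ZMod q) := L.take (L.length - (k - 1 - n)) with hP₀def
      set A : List (ZMod q) := L.drop (L.length - (k - 1 - n)) with hAdef
      have hLsplit : P₀ ++ A = L := List.take_append_drop _ _
      have hA : A.length = k - 1 - n := by
        simp [hAdef]; omega
      set B : List (ZMod q) := M₃.take n with hBdef
      set M₂' : List (ZMod q) := M₃.drop n with hM₂'def
      have hB : B.length = n := by simp [hBdef]; omega
      have hM₂' : M₂'.length = n := by simp [hM₂'def]; omega
      have hM₃split : B ++ M₂' = M₃ := List.take_append_drop _ _
      set E₂ : List (ZMod q) :=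
        c :: (B ++ RC bar B ++ bar c :: (RC bar A ++ M₂' ++ RC bar (RC bar A ++ M₂'))) with hE₂def
      have hfin : RCDerives bar k ((P₀ ++ A) ++ c :: ((B ++ M₂') ++ T))
          (((P₀ ++ A) ++ E₂) ++ c :: T) :=
        moveFin hinv c P₀ A B M₂' T (by omega) (by omega)
      rw [hLsplit, hM₃split] at hfin
      refine ⟨E ++ E₂, 4, ?_, ?_⟩
      · refine Relation.ReflTransGen.trans hmove1 ?_
        simpa [RCDerives, hLdef, List.append_assoc] using hfin
      · have hE₂len : E₂.length = 2 * n + 2 * k := by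
          simp [hE₂def, length_RC, hA, hB, hM₂']; omega
        simp only [List.length_append]
        omega

lemma phase {bar : ZMod q → ZMod q} (hinv : Function.Involutive bar) {k : ℕ} (hk : 2 ≤ k)
    (c : ZMod q) (P M T : List (ZMod q)) (hlen : 2 * (k - 1) ≤ M.length)
    (hpar : k % 2 = 0 → M.length % 2 = 0) :
    ∃ extra s, RCDerives bar k (P ++ c :: (M ++ T)) ((P ++ extra) ++ c :: T) ∧
      extra.length = M.length + s * k := by
  rcases Nat.mod_two_eq_zero_or_one M.length with he | ho
  · exact phase_even hinv hk c ((M.length - 2 * (k - 1)) / 2) P M T (by omega)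
  · have hko : k % 2 = 1 := by
      rcases Nat.mod_two_eq_zero_or_one k with h0 | h1
      · have := hpar h0; omega
      · exact h1
    have hkM : k ≤ M.length := by omega
    set V : List (ZMod q) := M.take k with hVdef
    set M₂ : List (ZMod q) := M.drop k with hM₂def
    have hV : V.length = k := by simp [hVdef]; omega
    have hMsplit : V ++ M₂ = M := List.take_append_drop _ _
    have hS : RCDerives bar k (P ++ c :: (M ++ T))
        (P ++ c :: ((V ++ RC bar V ++ M₂) ++ T)) := by
      have := moveS (bar := bar) c P V M₂ T hV
      rw [hMsplit] at this
      exact this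
    have hlen' : (V ++ RC bar V ++ M₂).length = M.length + k := by
      simp [length_RC, hV, hM₂def]; omega
    obtain ⟨extra, s, hder, hlenx⟩ :=
      phase_even hinv hk c ((M.length + k - 2 * (k - 1)) / 2) P (V ++ RC bar V ++ M₂) T
        (by rw [hlen']; omega)
    refine ⟨extra, s + 1, Relation.ReflTransGen.trans hS hder, ?_⟩
    have hmul : (s + 1) * k = s * k + k := by ring
    omega

lemma derives_append_right {bar : ZMod q → ZMod q} {k : ℕ} {a b : List (ZMod q)}
    (s : List (ZMod q)) (h : RCDerives bar k a b) :
    RCDerives bar k (a ++ s) (b ++ s) := by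
  refine Relation.ReflTransGen.lift (· ++ s) ?_ _ _ h
  rintro a b ⟨u, v, w, hv, rfl, rfl⟩
  exact ⟨u, v, w ++ s, hv, by simp, by simp⟩



lemma interleave_concat {α : Type*} : ∀ (as : List α) (gs : List (List α)) (g : List α) (a : α),
    gs.length = as.length + 1 →
    interleave (gs ++ [g]) (as ++ [a]) = interleave gs as ++ a :: g := by
  intro as
  induction as with
  | nil =>
    rintro ⟨⟩ g a h
    · simp at h
    · rename_i g0 gs
      cases gs
      · simp [interleave]
      · simp at h
  | cons a0 as ih =>
    rintro ⟨⟩ g a h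
    · simp at h
    · rename_i g0 gs
      simp only [List.length_cons, List.length_cons] at h
      simp [interleave, ih gs g a (by omega)]

lemma interleave_extend {α : Type*} : ∀ (as : List α) (gs : List (List α)) (g e : List α),
    gs.length = as.length →
    interleave (gs ++ [g ++ e]) as = interleave (gs ++ [g]) as ++ e := by
  intro as
  induction as with
  | nil =>
    rintro ⟨⟩ g e h
    · simp [interleave]
    · simp at h
  | cons a0 as ih =>
    rintro ⟨⟩ g e h
    · simp at h
    · rename_i g0 gs
      simp only [List.length_cons] at h
      simp [interleave, ih gs g e (by omega)]

lemma length_le_interleave {α : Type*} : ∀ (as : List α) (gs : List (List α)),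
    gs.length = as.length + 1 → as.length ≤ (interleave gs as).length := by
  intro as
  induction as with
  | nil => intro gs h; simp
  | cons a0 as ih =>
    rintro ⟨⟩ h
    · simp at h
    · rename_i g0 gs
      simp only [List.length_cons] at h
      have := ih gs (by omega)
      simp [interleave]
      omega

lemma mem_tail_concat {α : Type*} (A : List α) (b : α) (hA : A ≠ []) :
    b ∈ (A ++ [b]).tail := by
  cases A with
  | nil => simp at hA
  | cons a l => simp

lemma rec_lemma {bar : ZMod q → ZMod q} (hinv : Function.Involutive bar) {k : ℕ}
    (hk : 2 ≤ k) :
    ∀ (x1 : List (ZMod q)) (T z : List (ZMod q)),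
      (∃ (gs : List (List (ZMod q))) (gl : List (ZMod q)), gs.length = x1.length ∧
        z = interleave (gs ++ [gl]) x1 ++ T ∧
        (k % 2 = 0 → ∀ g ∈ (gs ++ [gl]).tail, g.length % 2 = 0) ∧
        2 * (k - 1) ≤ gl.length) →
      ∃ w, RCDerives bar k z (w ++ (x1 ++ T)) := by
  intro x1
  induction x1 using List.reverseRecOn with
  | nil =>
    rintro T z ⟨gs, gl, hlen, hz, -, -⟩
    have hgs : gs = [] := List.length_eq_zero_iff.mp (by simpa using hlen)
    subst hgs
    refine ⟨gl, ?_⟩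
    have hz' : z = gl ++ ([] ++ T) := by rw [hz]; simp [interleave]
    rw [hz']
    exact Relation.ReflTransGen.refl
  | append_singleton x2 c ih =>
    rintro T z ⟨gs, gl, hlen, hz, hptail, hgl⟩
    obtain ⟨gs₀, g1, rfl⟩ : ∃ gs₀ g1, gs = gs₀ ++ [g1] := by
      rcases List.eq_nil_or_concat gs with h | ⟨L, b, h⟩
      · exfalso; subst h; simp at hlen
      · exact ⟨L, b, by simpa [List.concat_eq_append] using h⟩
    have hgs₀len : gs₀.length = x2.length := by simpa using hlen
    have hconcat : interleave ((gs₀ ++ [g1]) ++ [gl]) (x2 ++ [c])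
        = interleave (gs₀ ++ [g1]) x2 ++ c :: gl :=
      interleave_concat x2 (gs₀ ++ [g1]) gl c (by simp [hgs₀len])
    set P : List (ZMod q) := interleave (gs₀ ++ [g1]) x2 with hPdef
    have hz' : z = P ++ c :: (gl ++ T) := by
      rw [hz, hconcat]; simp [List.append_assoc]
    have hpargl : k % 2 = 0 → gl.length % 2 = 0 := fun hke =>
      hptail hke gl (mem_tail_concat _ _ (by simp))
    obtain ⟨extra, s, hder, hlenx⟩ := phase hinv hk c P gl T hgl hpargl
    have hext : interleave (gs₀ ++ [g1 ++ extra]) x2 = P ++ extra := by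
      rw [hPdef, interleave_extend x2 gs₀ g1 extra hgs₀len]
    have hInv2 : ∃ (gs' : List (List (ZMod q))) (gl' : List (ZMod q)),
        gs'.length = x2.length ∧
        (P ++ extra) ++ c :: T = interleave (gs' ++ [gl']) x2 ++ (c :: T) ∧
        (k % 2 = 0 → ∀ g ∈ (gs' ++ [gl']).tail, g.length % 2 = 0) ∧
        2 * (k - 1) ≤ gl'.length := by
      refine ⟨gs₀, g1 ++ extra, hgs₀len, by rw [hext], ?_, ?_⟩
      · intro hke g hg
        have hsk : (s * k) % 2 = 0 := by
          rw [Nat.mul_mod, hke]; simp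
        cases gs₀ with
        | nil => simp at hg
        | cons a l =>
          simp only [List.cons_append, List.tail_cons] at hg
          rcases List.mem_append.mp hg with hg' | hg'
          · exact hptail hke g (by simp [hg'])
          · have hgeq : g = g1 ++ extra := by simpa using hg'
            subst hgeq
            have h1 : g1.length % 2 = 0 := hptail hke g1 (by simp)
            have h2 : gl.length % 2 = 0 := hptail hke gl (mem_tail_concat _ _ (by simp))
            simp only [List.length_append]
            omega
      · simp only [List.length_append]
        omega
    obtain ⟨w, hw⟩ := ih (c :: T) ((P ++ extra) ++ c :: T) hInv2
    refine ⟨w, ?_⟩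
    rw [hz']
    refine Relation.ReflTransGen.trans hder ?_
    simpa [RCDerives] using hw

theorem main_derives {bar : ZMod q → ZMod q} (hinv : Function.Involutive bar) {k : ℕ}
    (hk : 2 ≤ k) (x y : List (ZMod q)) (hps : ProperlySpaced k x y) :
    ∃ w, RCDerives bar k y (w ++ x) := by
  obtain ⟨hxlen, gaps, hglen, hy, hpar⟩ := hps
  have hylen : k ≤ y.length := by
    have := length_le_interleave x gaps (by omega)
    rw [hy]; omega
  set u0 : List (ZMod q) := y.take (y.length - k) with hu0
  set v0 : List (ZMod q) := y.drop (y.length - k) with hv0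
  have hv0len : v0.length = k := by simp [hv0]; omega
  have hysplit : u0 ++ v0 = y := List.take_append_drop _ _
  have hinfl : RCDerives bar k y (y ++ (RC bar v0 ++ v0)) := by
    have s1 : RCDerives bar k y (y ++ RC bar v0) :=
      single bar k u0 v0 [] hv0len (by rw [← hysplit]; simp) (by rw [← hysplit]; simp)
    have s2 : RCDerives bar k (y ++ RC bar v0) (y ++ (RC bar v0 ++ v0)) := by
      refine single bar k y (RC bar v0) [] (by simp [hv0len]) (by simp) ?_
      rw [RC_RC hinv]
      simp
    exact Relation.ReflTransGen.trans s1 s2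
  obtain ⟨gs, gl0, rfl⟩ : ∃ gs gl0, gaps = gs ++ [gl0] := by
    rcases List.eq_nil_or_concat gaps with h | ⟨L, b, h⟩
    · exfalso; subst h; simp at hglen
    · exact ⟨L, b, by simpa [List.concat_eq_append] using h⟩
  have hgslen : gs.length = x.length := by
    have := hglen; simp at this; omega
  have hInv : ∃ (gs' : List (List (ZMod q))) (gl' : List (ZMod q)),
      gs'.length = x.length ∧
      y ++ (RC bar v0 ++ v0) = interleave (gs' ++ [gl']) x ++ ([] : List (ZMod q)) ∧
      (k % 2 = 0 → ∀ g ∈ (gs' ++ [gl']).tail, g.length % 2 = 0) ∧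
      2 * (k - 1) ≤ gl'.length := by
    refine ⟨gs, gl0 ++ (RC bar v0 ++ v0), hgslen, ?_, ?_, ?_⟩
    · rw [interleave_extend x gs gl0 (RC bar v0 ++ v0) hgslen, ← hy]
      simp
    · intro hke g hg
      cases gs with
      | nil => exfalso; have := hgslen; simp at this; omega
      | cons a l =>
        simp only [List.cons_append, List.tail_cons] at hg
        rcases List.mem_append.mp hg with hg' | hg'
        · exact hpar hke g (by simp [hg'])
        · have hgeq : g = gl0 ++ (RC bar v0 ++ v0) := by simpa using hg'
          subst hgeq
          have h2 : gl0.length % 2 = 0 := hpar hke gl0 (mem_tail_concat _ _ (by simp))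
          have hkeven : k % 2 = 0 := hke
          simp only [List.length_append, length_RC, hv0len]
          omega
    · simp only [List.length_append, length_RC, hv0len]
      omega
  obtain ⟨w, hw⟩ := rec_lemma hinv hk x [] (y ++ (RC bar v0 ++ v0)) hInv
  refine ⟨w, Relation.ReflTransGen.trans hinfl ?_⟩
  simpa [RCDerives] using hw

end RCSync

/-- Synchronization lemma: if `x ∈ Z_q^k` is properly spaced in `y`, then there
is a string `v` with both `y ⟹ₖ* v·x` and `y·x ⟹ₖ* v·x`. -/
theorem stmt11 {q : ℕ} (bar : ZMod q → ZMod q) (hinv : Function.Involutive bar)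
    (hfp : ∀ a, bar a ≠ a) (k : ℕ) (hk : 2 ≤ k) (x y : List (ZMod q))
    (hps : ProperlySpaced k x y) :
    ∃ v : List (ZMod q),
      RCDerives bar k y (v ++ x) ∧ RCDerives bar k (y ++ x) (v ++ x) := by
  obtain ⟨w, hw⟩ := RCSync.main_derives hinv hk x y hps
  have hxlen : x.length = k := hps.1
  have h2 : RCDerives bar k (w ++ x) ((w ++ x) ++ RCSync.RC bar x) :=
    RCSync.single bar k w x [] hxlen (by simp) (by simp)
  have h3 : RCDerives bar k ((w ++ x) ++ RCSync.RC bar x)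
      (((w ++ x) ++ RCSync.RC bar x) ++ x) := by
    refine RCSync.single bar k (w ++ x) (RCSync.RC bar x) []
      (by simp [hxlen]) (by simp) ?_
    rw [RCSync.RC_RC hinv]
    simp
  refine ⟨(w ++ x) ++ RCSync.RC bar x, ?_, ?_⟩
  · exact Relation.ReflTransGen.trans hw (Relation.ReflTransGen.trans h2 h3)
  · exact RCSync.derives_append_right x (Relation.ReflTransGen.trans hw h2)
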